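/- Let a < b be coprime positive integers with b ≥ 33 and let c = a + b. Then there exists a real θ such that cos aθ + cos bθ + cos cθ ≤ −3/2 + 6/b. -/

import Mathlib

open Real

private lemma cos_le_cos_add_abs (x y : ℝ) : cos x ≤ cos y + |x - y| := by
  have h1 : |cos x - cos y| ≤ |x - y| := by
    rw [Real.cos_sub_cos]
    have h2 : |Real.sin ((x + y) / 2)| ≤ 1 := Real.abs_sin_le_one _
    have h3 : |Real.sin ((x - y) / 2)| ≤ |(x - y) / 2| := Real.abs_sin_le_abs
    have h4 : |(x - y) / 2| = |x - y| / 2 := by rw [abs_div]; norm_num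
    calc |-2 * Real.sin ((x + y) / 2) * Real.sin ((x - y) / 2)|
        = 2 * |Real.sin ((x + y) / 2)| * |Real.sin ((x - y) / 2)| := by
          rw [abs_mul, abs_mul]; norm_num
      _ ≤ 2 * 1 * (|x - y| / 2) := by
          apply mul_le_mul _ (h4 ▸ h3) (abs_nonneg _) (by norm_num)
          nlinarith [abs_nonneg (Real.sin ((x + y) / 2))]
      _ = |x - y| := by ring
  have := le_abs_self (cos x - cos y)
  linarith

theorem stmt_12 (a b c : ℕ) (ha : 0 < a) (hab : a < b) (hgcd : Nat.gcd a b = 1)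
    (hb : 33 ≤ b) (hc : c = a + b) :
    ∃ θ : ℝ, cos (a * θ) + cos (b * θ) + cos (c * θ) ≤ -3/2 + 6 / b := by
  have hbpos : (0:ℝ) < b := by positivity
  have hApos : (0:ℤ) < (a:ℤ) := by exact_mod_cast ha
  have hAB : (a:ℤ) < (b:ℤ) := by exact_mod_cast hab
  -- Bezout
  have hbez : (a:ℤ) * Nat.gcdA a b + (b:ℤ) * Nat.gcdB a b = 1 := by
    have h := Nat.gcd_eq_gcd_ab a b
    rw [hgcd] at h
    exact_mod_cast h.symm
  set x : ℤ := Nat.gcdA a b with hx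
  set y : ℤ := Nat.gcdB a b with hy
  set r : ℤ := ((a:ℤ) + 2*(b:ℤ) + 1) % 3 with hr
  set V : ℤ := (b:ℤ) - 1 + r with hVdef
  have hV3 : (V - (a:ℤ)) % 3 = 0 := by omega
  have hVlb : (b:ℤ) - 1 ≤ V := by omega
  have hVub : V ≤ (b:ℤ) + 1 := by omega
  set w : ℤ := (V - (a:ℤ)) / 3 with hwdef
  have hw3 : 3 * w = V - (a:ℤ) := by omega
  set j : ℤ := x * w with hjdef
  set m : ℤ := -(y * w) with hmdef
  set s : ℤ := 1 + 3 * j with hsdef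
  have hAs : (a:ℤ) * s = V + 3 * (b:ℤ) * m := by
    have hax : (a:ℤ) * x = 1 - (b:ℤ) * y := by linarith
    calc (a:ℤ) * s = (a:ℤ) + 3 * ((a:ℤ) * x) * w := by rw [hsdef, hjdef]; ring
      _ = (a:ℤ) + 3 * (1 - (b:ℤ)*y) * w := by rw [hax]
      _ = (a:ℤ) + (3*w) - 3*(b:ℤ)*(y*w) := by ring
      _ = V + 3 * (b:ℤ) * m := by rw [hw3, hmdef]; ring
  refine ⟨2 * π * s / (3 * b), ?_⟩
  set θ : ℝ := 2 * π * s / (3 * b) with hθ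
  set u : ℝ := 2 * π * V / (3 * b) with hu
  have hbne : (b:ℝ) ≠ 0 := ne_of_gt hbpos
  -- angle identities
  have hAsR : (a:ℝ) * s = (V:ℝ) + 3 * b * m := by exact_mod_cast hAs
  have haθ : (a:ℝ) * θ = u + m * (2 * π) := by
    rw [hθ, hu]; field_simp; linear_combination hAsR
  have hsR : (s:ℝ) = 1 + 3 * j := by exact_mod_cast hsdef
  have hbθ : (b:ℝ) * θ = 2 * π / 3 + j * (2 * π) := by
    rw [hθ]; field_simp; linear_combination hsR
  have hcθ : (c:ℝ) * θ = (u + 2 * π / 3) + (m + j) * (2 * π) := by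
    have : (c:ℝ) = a + b := by exact_mod_cast hc
    rw [this, add_mul, haθ, hbθ]; ring
  have hcos_a : cos ((a:ℝ) * θ) = cos u := by rw [haθ, Real.cos_add_int_mul_two_pi]
  have hcos_b : cos ((b:ℝ) * θ) = -(1/2) := by
    rw [hbθ, Real.cos_add_int_mul_two_pi]
    have : (2 * π / 3 : ℝ) = π - π / 3 := by ring
    rw [this, Real.cos_pi_sub, Real.cos_pi_div_three]
  have hcos_c : cos ((c:ℝ) * θ) = cos (u + 2 * π / 3) := by
    rw [hcθ]
    have := Real.cos_add_int_mul_two_pi (u + 2 * π / 3) (m + j)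
    rw [← this]; push_cast; ring_nf
  -- bound |u - 2π/3|
  have hVb1 : ((V:ℝ) - b) ≤ 1 := by
    have : V - (b:ℤ) ≤ 1 := by omega
    exact_mod_cast this
  have hVb2 : (-1:ℝ) ≤ ((V:ℝ) - b) := by
    have : (-1:ℤ) ≤ V - (b:ℤ) := by omega
    exact_mod_cast this
  have hpi := Real.pi_pos
  have hud : |u - 2 * π / 3| ≤ 2 * π / (3 * b) := by
    have heq : u - 2 * π / 3 = 2 * π * ((V:ℝ) - b) / (3 * b) := by
      rw [hu]; field_simp
    have h3b : (0:ℝ) < 3 * b := by positivity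
    have habs : |((V:ℝ) - b)| ≤ 1 := abs_le.mpr ⟨hVb2, hVb1⟩
    have h5 : |2 * π * ((V:ℝ) - b)| ≤ 2 * π := by
      rw [abs_mul, abs_of_pos (by positivity : (0:ℝ) < 2 * π)]
      nlinarith
    rw [heq, abs_div, abs_of_pos h3b]
    exact (div_le_div_iff_of_pos_right h3b).mpr h5
  -- bound the two cosines
  have hbnd1 : cos u ≤ -(1/2) + 2 * π / (3 * b) := by
    have h1 := cos_le_cos_add_abs u (2 * π / 3)
    have h2 : cos (2 * π / 3 : ℝ) = -(1/2) := by
      have : (2 * π / 3 : ℝ) = π - π / 3 := by ring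
      rw [this, Real.cos_pi_sub, Real.cos_pi_div_three]
    rw [h2] at h1
    linarith
  have hbnd2 : cos (u + 2 * π / 3) ≤ -(1/2) + 2 * π / (3 * b) := by
    have h1 := cos_le_cos_add_abs (u + 2 * π / 3) (4 * π / 3)
    have h2 : cos (4 * π / 3 : ℝ) = -(1/2) := by
      have : (4 * π / 3 : ℝ) = π / 3 + π := by ring
      rw [this, Real.cos_add_pi, Real.cos_pi_div_three]
    have h3 : |u + 2 * π / 3 - 4 * π / 3| = |u - 2 * π / 3| := by ring_nf
    rw [h2, h3] at h1
    linarith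
  -- finish
  have hfinal : 2 * (2 * π / (3 * b)) ≤ 6 / b := by
    have heq2 : 2 * (2 * π / (3 * (b:ℝ))) = 4 * π / (3 * b) := by ring
    rw [heq2, div_le_div_iff₀ (by positivity) hbpos]
    nlinarith [Real.pi_le_four, mul_le_mul_of_nonneg_right Real.pi_le_four (le_of_lt hbpos)]
  rw [hcos_a, hcos_b, hcos_c]
  linarith
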